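/- Every graded ring automorphism φ of S_n permutes the 2n-element set {x_1, −x_1} ∪ {2x_j − x_1, −(2x_j − x_1) : 2 ≤ j ≤ n}; equivalently, setting e_1 = x_1 and e_j = 2x_j − x_1 for 2 ≤ j ≤ n, there exist a permutation σ of {1,…,n} and signs ε : {1,…,n} → {1,−1} such that φ(e_i) = ε(i)·e_{σ(i)} for all i. -/

import Mathlib

/-!
Context: for n ≥ 1, S_n := ℤ[x_1,…,x_n]/(x_1², x_j² − x_1 x_j : j = 2,…,n).
The degree-2 part H² of S_n is the free abelian group with basis x_1,…,x_n.
A graded ring automorphism of S_n is a ring automorphism mapping H² onto H².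

STATEMENT 11: Every graded ring automorphism φ of S_n permutes the 2n-element
set {x_1, −x_1} ∪ {2x_j − x_1, −(2x_j − x_1) : 2 ≤ j ≤ n}; equivalently,
setting e_1 = x_1 and e_j = 2x_j − x_1 for 2 ≤ j ≤ n, there exist a
permutation σ of {1,…,n} and signs ε : {1,…,n} → {1,−1} such that
φ(e_i) = ε(i)·e_{σ(i)} for all i.
-/

open MvPolynomial

noncomputable section

/-- The defining relations x_1², x_j² − x_1 x_j (j ≥ 2) of S_n. -/
def srel (n : ℕ) (j : Fin n) : MvPolynomial (Fin n) ℤ :=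
  X j ^ 2 -
    (if j.val = 0 then 0
      else X (⟨0, Nat.lt_of_le_of_lt (Nat.zero_le _) j.isLt⟩ : Fin n)) * X j

/-- S_n = ℤ[x_1,…,x_n]/(x_1², x_j² − x_1 x_j : j = 2,…,n). -/
abbrev SRing (n : ℕ) : Type :=
  MvPolynomial (Fin n) ℤ ⧸ Ideal.span (Set.range (srel n))

/-- The image x_i of X i in S_n. -/
def sx (n : ℕ) (i : Fin n) : SRing n :=
  Ideal.Quotient.mk _ (X i)

/-- e_1 = x_1 and e_j = 2x_j − x_1 for j ≥ 2. -/
def se (n : ℕ) [NeZero n] (i : Fin n) : SRing n :=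
  if i = 0 then sx n 0 else 2 • sx n i - sx n 0

namespace SAux
open TrivSqZeroExt

set_option maxHeartbeats 1000000
set_option synthInstance.maxHeartbeats 1000000

abbrev Lam := DualNumber (DualNumber ℤ)

lemma dn_mul (x y : DualNumber ℤ) : x * y = (fst x * fst y, fst x * snd y + fst y * snd x) := by
  refine TrivSqZeroExt.ext ?_ ?_
  · rw [fst_mul]; rfl
  · rw [snd_mul]; simp [smul_eq_mul]; ring

lemma lam_mul (x y : Lam) : x * y = (fst x * fst y, fst x * snd y + fst y * snd x) := by
  refine TrivSqZeroExt.ext ?_ ?_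
  · rw [fst_mul]; rfl
  · rw [snd_mul]; simp [smul_eq_mul]; ring

def U : Lam := (((0:ℤ),(2:ℤ)),((0:ℤ),(0:ℤ)))
def V : Lam := (((0:ℤ),(1:ℤ)),((1:ℤ),(0:ℤ)))

lemma hUU : U * U = 0 := by rfl
lemma hUV : U * V = ((((0:ℤ),(0:ℤ)) : DualNumber ℤ), (((0:ℤ),(2:ℤ)) : DualNumber ℤ)) := by
  rfl
lemma hVV : V * V = U * V := by
  rfl
lemma torsion (c : ℤ) (h : c • (U*V) = 0) : c = 0 := by
  have h2 := congrArg (fun x : Lam => TrivSqZeroExt.snd (TrivSqZeroExt.snd x)) h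
  simp only [hUV, TrivSqZeroExt.snd_smul, TrivSqZeroExt.snd_zero] at h2
  change c * 2 = 0 at h2
  omega
lemma torsionU (c : ℤ) (h : c • U = 0) : c = 0 := by
  have h2 := congrArg (fun x : Lam => TrivSqZeroExt.snd (TrivSqZeroExt.fst x)) h
  simp only [TrivSqZeroExt.fst_smul, TrivSqZeroExt.snd_smul, TrivSqZeroExt.fst_zero, TrivSqZeroExt.snd_zero] at h2
  change c * 2 = 0 at h2
  omega
lemma quad (a b : ℤ) : (a • U + b • V) * (a • U + b • V) = (b*b + 2*(a*b)) • (U * V) := by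
  have h1 : ∀ c : ℤ, ∀ x : Lam, c • x = (c : Lam) * x := fun c x => zsmul_eq_mul x c
  rw [h1, h1, h1]
  push_cast
  linear_combination ((a:Lam) * (a:Lam)) * hUU + ((b:Lam) * (b:Lam)) * hVV

variable {n : ℕ} [NeZero n]

lemma fin_mk_zero (h : 0 < n) : (⟨0, h⟩ : Fin n) = 0 := by
  refine Fin.ext ?_
  simp

lemma aeval_srel {R : Type} [CommRing R] (f : Fin n → R)
    (h0 : f 0 * f 0 = 0) (hrel : ∀ j, j ≠ 0 → f j * f j = f 0 * f j) :
    ∀ p ∈ Ideal.span (Set.range (srel n)), aeval f p = 0 := by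
  have hker : Ideal.span (Set.range (srel n)) ≤
      RingHom.ker ((aeval f : MvPolynomial (Fin n) ℤ →ₐ[ℤ] R) : MvPolynomial (Fin n) ℤ →+* R) := by
    rw [Ideal.span_le]
    rintro _ ⟨j, rfl⟩
    simp only [SetLike.mem_coe, RingHom.mem_ker]
    by_cases hj : j = 0
    · subst hj
      simp [srel, sq, RingHom.coe_coe, h0]
    · have hv : (j : Fin n).val ≠ 0 := by
        exact Fin.val_ne_zero_iff.mpr hj
      simp only [srel, if_neg hv, fin_mk_zero, map_sub, map_pow, map_mul, RingHom.coe_coe, aeval_X]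
      rw [sq, hrel j hj, sub_self]
  intro p hp
  exact hker hp

lemma mk_sum (a : Fin n → ℤ) :
    (∑ i, a i • sx n i) = Ideal.Quotient.mk _ (∑ i, a i • X i) := by
  rw [map_sum]
  refine Finset.sum_congr rfl fun i _ => ?_
  rw [map_zsmul]
  rfl

lemma eval_sum {R : Type} [CommRing R] (f : Fin n → R) (a : Fin n → ℤ) :
    aeval f (∑ i, a i • X (R := ℤ) i) = ∑ i, a i • f i := by
  rw [map_sum]
  refine Finset.sum_congr rfl fun i _ => ?_
  rw [map_zsmul, aeval_X]


lemma mem_of_sq (a : Fin n → ℤ)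
    (h : (∑ i, a i • sx n i) * (∑ i, a i • sx n i) = 0) :
    (∑ i, a i • X (R := ℤ) i) * (∑ i, a i • X (R := ℤ) i) ∈ Ideal.span (Set.range (srel n)) := by
  rw [← Ideal.Quotient.eq_zero_iff_mem, map_mul, ← mk_sum]
  exact h

lemma cond1 (a : Fin n → ℤ)
    (h : (∑ i, a i • sx n i) * (∑ i, a i • sx n i) = 0)
    (j : Fin n) (hj : j ≠ 0) : a j * a j + 2 * (a 0 * a j) = 0 := by
  classical
  set f : Fin n → Lam := fun k => if k = 0 then U else if k = j then V else 0 with hf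
  have h0 : f 0 * f 0 = 0 := by simp [hf, hUU]
  have hrel : ∀ s, s ≠ 0 → f s * f s = f 0 * f s := by
    intro s hs
    by_cases h1 : s = j
    · simp [hf, hs, h1, hj, hVV]
    · simp [hf, hs, h1]
  have hev := aeval_srel f h0 hrel _ (mem_of_sq a h)
  rw [map_mul, eval_sum] at hev
  have hsum : (∑ i, a i • f i) = a 0 • U + a j • V := by
    have hsub : ∑ i ∈ ({0, j} : Finset (Fin n)), a i • f i = ∑ i, a i • f i :=
      Finset.sum_subset (Finset.subset_univ _) (fun x _ hx => by
        simp only [Finset.mem_insert, Finset.mem_singleton, not_or] at hx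
        simp [hf, hx.1, hx.2])
    rw [← hsub, Finset.sum_pair (Ne.symm hj)]
    simp [hf, hj]
  rw [hsum, quad] at hev
  exact torsion _ hev

lemma cond2 (a : Fin n → ℤ)
    (h : (∑ i, a i • sx n i) * (∑ i, a i • sx n i) = 0)
    (i j : Fin n) (hi : i ≠ 0) (hj : j ≠ 0) (hij : i ≠ j) : a i * a j = 0 := by
  classical
  set f : Fin n → Lam := fun k => if k = 0 then U else if k = i then V else if k = j then V else 0 with hf
  have h0 : f 0 * f 0 = 0 := by simp [hf, hUU]
  have hrel : ∀ s, s ≠ 0 → f s * f s = f 0 * f s := by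
    intro s hs
    by_cases h1 : s = i
    · simp [hf, hs, h1, hi, hVV]
    · by_cases h2 : s = j
      · simp [hf, hs, h1, h2, hj, hVV]
      · simp [hf, hs, h1, h2]
  have hev := aeval_srel f h0 hrel _ (mem_of_sq a h)
  rw [map_mul, eval_sum] at hev
  have hsum : (∑ k, a k • f k) = a 0 • U + (a i + a j) • V := by
    have hsub : ∑ k ∈ ({0, i, j} : Finset (Fin n)), a k • f k = ∑ k, a k • f k :=
      Finset.sum_subset (Finset.subset_univ _) (fun x _ hx => by
        simp only [Finset.mem_insert, Finset.mem_singleton, not_or] at hx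
        simp [hf, hx.1, hx.2.1, hx.2.2])
    have h0i : (0 : Fin n) ∉ ({i, j} : Finset (Fin n)) := by
      simp [Ne.symm hi, Ne.symm hj]
    rw [← hsub, Finset.sum_insert h0i, Finset.sum_pair hij]
    have : a 0 • f 0 + (a i • f i + a j • f j) = a 0 • U + (a i • V + a j • V) := by
      simp [hf, hi, hj, hij, Ne.symm hij]
    rw [this, ← add_smul]
  rw [hsum, quad] at hev
  have e3 := torsion _ hev
  have e1 := cond1 a h i hi
  have e2 := cond1 a h j hj
  have : 2 * (a i * a j) = 0 := by linear_combination e3 - e1 - e2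
  omega

lemma se_zero : se n 0 = sx n 0 := by simp [se]

lemma se_ne (j : Fin n) (hj : j ≠ 0) : se n j = 2 • sx n j - sx n 0 := by
  simp [se, hj]

lemma classify (y : SRing n) (hy : y ∈ Submodule.span ℤ (Set.range (sx n)))
    (hsq : y * y = 0) : ∃ (k : Fin n) (c : ℤ), y = c • se n k := by
  classical
  obtain ⟨a, ha⟩ := (Submodule.mem_span_range_iff_exists_fun ℤ).mp hy
  rw [← ha] at hsq
  by_cases hz : ∀ j, j ≠ 0 → a j = 0
  · refine ⟨0, a 0, ?_⟩
    rw [← ha, se_zero]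
    rw [Fintype.sum_eq_single 0 (fun j hjne => by rw [hz j hjne, zero_smul])]
  · push_neg at hz
    obtain ⟨j, hj0, hja⟩ := hz
    refine ⟨j, -(a 0), ?_⟩
    have e1 : a j * a j + 2 * (a 0 * a j) = 0 := cond1 a hsq j hj0
    have haj : a j = -(2 * a 0) := by
      rcases mul_eq_zero.mp (show a j * (a j + 2 * a 0) = 0 by linear_combination e1) with h | h
      · exact absurd h hja
      · linarith
    have hothers : ∀ t : Fin n, t ≠ 0 → t ≠ j → a t = 0 := by
      intro t ht0 htj
      have := cond2 a hsq j t hj0 ht0 (Ne.symm htj)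
      rcases mul_eq_zero.mp this with h | h
      · exact absurd h hja
      · exact h
    rw [← ha, se_ne j hj0]
    have hsub : ∑ t ∈ ({0, j} : Finset (Fin n)), a t • sx n t = ∑ t, a t • sx n t :=
      Finset.sum_subset (Finset.subset_univ _) (fun x _ hx => by
        simp only [Finset.mem_insert, Finset.mem_singleton, not_or] at hx
        rw [hothers x hx.1 hx.2, zero_smul])
    rw [← hsub, Finset.sum_pair (Ne.symm hj0), haj]
    have h2 : (2 : ℕ) • sx n j = sx n j + sx n j := two_smul ℕ _
    rw [h2]
    module


lemma se_sq (i : Fin n) : se n i * se n i = 0 := by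
  have hsrel0 : (X (R := ℤ) (0 : Fin n)) * X 0 = srel n 0 := by
    simp [srel, sq]
  by_cases hi : i = 0
  · subst hi
    rw [se_zero]
    show (Ideal.Quotient.mk _ (X 0)) * (Ideal.Quotient.mk _ (X 0)) = 0
    rw [← map_mul, hsrel0, Ideal.Quotient.eq_zero_iff_mem]
    exact Ideal.subset_span ⟨0, rfl⟩
  · rw [se_ne i hi]
    have h1 : (2 • sx n i - sx n 0) = Ideal.Quotient.mk _ (2 • X i - X 0) := by
      rw [map_sub, map_nsmul]; rfl
    rw [h1, ← map_mul, Ideal.Quotient.eq_zero_iff_mem]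
    have hv : (i : Fin n).val ≠ 0 := Fin.val_ne_zero_iff.mpr hi
    have hsreli : srel n i = X i ^ 2 - X 0 * X i := by
      rw [srel, if_neg hv, fin_mk_zero]
    have hexp : (2 • X (R := ℤ) i - X 0) * (2 • X i - X 0) = 4 * srel n i + srel n 0 := by
      rw [hsreli, ← hsrel0]
      push_cast
      ring
    rw [hexp]
    exact add_mem (Ideal.mul_mem_left _ _ (Ideal.subset_span ⟨i, rfl⟩))
      (Ideal.subset_span ⟨0, rfl⟩)


def sP (n : ℕ) [NeZero n] (i : Fin n) : MvPolynomial (Fin n) ℤ :=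
  if i = 0 then X 0 else 2 • X i - X 0

lemma se_mk (i : Fin n) : se n i = Ideal.Quotient.mk _ (sP n i) := by
  by_cases hi : i = 0
  · subst hi; rw [se_zero, sP, if_pos rfl]; rfl
  · rw [se_ne i hi, sP, if_neg hi, map_sub, map_nsmul]; rfl

def cmat (i t : Fin n) : ℤ :=
  if i = 0 then (if t = 0 then 1 else 0)
  else if t = i then 2 else if t = 0 then -1 else 0

lemma eval_sP (t i : Fin n) :
    aeval (fun s : Fin n => if s = t then U else 0) (sP n i) = cmat i t • U := by
  classical
  by_cases hi : i = 0
  · subst hi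
    rw [sP, if_pos rfl, aeval_X, cmat, if_pos rfl]
    by_cases ht : t = 0
    · subst ht; simp
    · simp [Ne.symm ht, ht]
  · rw [sP, if_neg hi, map_sub, map_nsmul, aeval_X, aeval_X, cmat, if_neg hi]
    by_cases hti : t = i
    · subst hti
      simp [Ne.symm hi, hi, two_smul, two_smul ℤ U]
    · by_cases ht0 : t = 0
      · subst ht0
        simp [hi, Ne.symm hi]
      · simp [Ne.symm hti, Ne.symm ht0, hti, ht0]


lemma rigid (i k : Fin n) (m : ℤ) (h : se n i = m • se n k) : i = k ∧ m = 1 := by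
  classical
  have hmem : sP n i - m • sP n k ∈ Ideal.span (Set.range (srel n)) := by
    rw [← Ideal.Quotient.eq_zero_iff_mem, map_sub, map_zsmul, ← se_mk, ← se_mk, h, sub_self]
  have key : ∀ t : Fin n, cmat i t = m * cmat k t := by
    intro t
    set f : Fin n → Lam := fun s => if s = t then U else 0 with hf
    have h0 : f 0 * f 0 = 0 := by
      by_cases h1 : (0 : Fin n) = t <;> simp [hf, h1, hUU]
    have hrel : ∀ s, s ≠ 0 → f s * f s = f 0 * f s := by
      intro s hs
      by_cases h1 : s = t <;> by_cases h2 : (0 : Fin n) = t <;> simp [hf, h1, h2, hUU]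
    have hev := aeval_srel f h0 hrel _ hmem
    rw [map_sub, map_zsmul, hf] at hev
    erw [eval_sP, eval_sP] at hev
    rw [smul_smul, ← sub_smul] at hev
    have := torsionU _ hev
    linarith
  by_cases hi : i = 0 <;> by_cases hk : k = 0
  · subst hi hk
    refine ⟨rfl, ?_⟩
    have := key 0
    simp [cmat] at this
    omega
  · exfalso
    have h1 := key 0
    have h2 := key k
    simp [cmat, hi, hk, Ne.symm hk] at h1 h2
    omega
  · exfalso
    have h1 := key i
    simp [cmat, hi, hk] at h1
  · by_cases hik : i = k
    · subst hik
      refine ⟨rfl, ?_⟩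
      have := key i
      simp [cmat, hi] at this
      omega
    · exfalso
      have h1 := key i
      simp [cmat, hi, hk, hik, Ne.symm hik] at h1

end SAux

theorem graded_automorphism_permutes (n : ℕ) [NeZero n]
    (φ : SRing n ≃+* SRing n)
    (hφ : φ '' (Submodule.span ℤ (Set.range (sx n)) : Set (SRing n))
        = (Submodule.span ℤ (Set.range (sx n)) : Set (SRing n))) :
    ∃ (σ : Equiv.Perm (Fin n)) (ε : Fin n → ℤ),
      (∀ i, ε i = 1 ∨ ε i = -1) ∧ ∀ i, φ (se n i) = ε i • se n (σ i) := by
  classical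
  have hmem : ∀ i, se n i ∈ Submodule.span ℤ (Set.range (sx n)) := by
    intro i
    by_cases hi : i = 0
    · subst hi; rw [SAux.se_zero]; exact Submodule.subset_span ⟨0, rfl⟩
    · rw [SAux.se_ne i hi]
      refine sub_mem ?_ (Submodule.subset_span ⟨0, rfl⟩)
      have hx : sx n i ∈ Submodule.span ℤ (Set.range (sx n)) :=
        Submodule.subset_span ⟨i, rfl⟩
      rw [two_smul]
      exact add_mem hx hx
  have hφmem : ∀ i, φ (se n i) ∈ Submodule.span ℤ (Set.range (sx n)) := by
    intro i
    have h1 : φ (se n i) ∈ φ '' (Submodule.span ℤ (Set.range (sx n)) : Set (SRing n)) :=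
      Set.mem_image_of_mem _ (hmem i)
    rw [hφ] at h1
    exact h1
  have hsymmem : ∀ i, φ.symm (se n i) ∈ Submodule.span ℤ (Set.range (sx n)) := by
    intro i
    have h1 : (se n i : SRing n) ∈ φ '' (Submodule.span ℤ (Set.range (sx n)) : Set (SRing n)) := by
      rw [hφ]; exact hmem i
    obtain ⟨z, hz, hze⟩ := h1
    have h2 : φ.symm (se n i) = z := by rw [← hze, RingEquiv.symm_apply_apply]
    rw [h2]; exact hz
  have hφsq : ∀ i, φ (se n i) * φ (se n i) = 0 := fun i => by
    rw [← map_mul, SAux.se_sq, map_zero]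
  have hsymsq : ∀ i, φ.symm (se n i) * φ.symm (se n i) = 0 := fun i => by
    rw [← map_mul, SAux.se_sq, map_zero]
  choose τ c hc using fun i => SAux.classify (φ (se n i)) (hφmem i) (hφsq i)
  choose ρ d hd using fun i => SAux.classify (φ.symm (se n i)) (hsymmem i) (hsymsq i)
  have key : ∀ i, ρ (τ i) = i ∧ c i * d (τ i) = 1 := by
    intro i
    have h1 : se n i = (c i * d (τ i)) • se n (ρ (τ i)) := by
      have h2 := congrArg φ.symm (hc i)
      rw [RingEquiv.symm_apply_apply, map_zsmul, hd (τ i), smul_smul] at h2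
      exact h2
    obtain ⟨he, hm⟩ := SAux.rigid i (ρ (τ i)) _ h1
    exact ⟨he.symm, hm⟩
  have hinj : Function.Injective τ := by
    intro a b hab
    rw [← (key a).1, hab, (key b).1]
  refine ⟨Equiv.ofBijective τ (Finite.injective_iff_bijective.mp hinj), c, ?_, ?_⟩
  · intro i
    exact Int.isUnit_iff.mp (IsUnit.of_mul_eq_one _ (key i).2)
  · intro i
    exact hc i


end
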